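/- Let ν ∈ 𝒮 satisfy ν(f) ≤ ∫₀¹ φ(x)(e^{f(x)} − 1) dx for every f ∈ C([0,1]) (equivalently, J_ini(ν) = 0). Then ν(f) = ∫₀¹ φ(x) f(x) dx for every f ∈ C([0,1]). -/

import Mathlib

open MeasureTheory

noncomputable section

/-- The unit interval `[0,1]`. -/
abbrev I01 := unitInterval

/-- The Banach space `C([0,1])` of continuous real functions with the sup norm. -/
abbrev CI := C(I01, ℝ)

/-- The topological dual `𝒮` of `C([0,1])` with the operator norm. -/
abbrev S := CI →L[ℝ] ℝ

lemma integrable_of_cont {g : I01 → ℝ} (hg : Continuous g) :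
    Integrable g (volume : Measure I01) :=
  hg.integrable_of_hasCompactSupport (HasCompactSupport.of_compactSpace _)

lemma exp_sub_one_le_of_abs_le {s : ℝ} (hs : |s| ≤ 1) :
    Real.exp s - 1 ≤ s + s ^ 2 := by
  have h2 := Real.exp_bound hs (n := 2) (by norm_num)
  have hsum : ∑ m ∈ Finset.range 2, s ^ m / (m.factorial : ℝ) = 1 + s := by
    simp [Finset.sum_range_succ]
  rw [hsum] at h2
  have h3 : Real.exp s - (1 + s) ≤ |s| ^ 2 * ((2:ℕ).succ / ((2:ℕ).factorial * (2:ℕ))) :=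
    (abs_le.mp h2).2
  have h4 : |s| ^ 2 = s ^ 2 := sq_abs s
  have : ((2:ℕ).succ : ℝ) / ((2:ℕ).factorial * (2:ℕ)) = 3 / 4 := by norm_num
  rw [this, h4] at h3
  nlinarith [sq_nonneg s]

lemma key_le (φ : CI) (hφ : ∀ x, 0 < φ x) (ν : S)
    (h : ∀ f : CI, ν f ≤ ∫ x : I01, φ x * (Real.exp (f x) - 1)) (f : CI) :
    ν f ≤ ∫ x : I01, φ x * f x := by
  set K : ℝ := ∫ x : I01, φ x * (f x) ^ 2 with hKdef
  have hK0 : 0 ≤ K := integral_nonneg fun x => mul_nonneg (hφ x).le (sq_nonneg _)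
  refine le_of_forall_pos_le_add ?_
  intro ε hε
  set M : ℝ := ‖f‖ + 1 with hMdef
  have hM : 0 < M := by positivity
  set t : ℝ := min (1 / M) (ε / (K + 1)) with htdef
  have ht0 : 0 < t := lt_min (by positivity) (by positivity)
  have htf : ∀ x : I01, |t * f x| ≤ 1 := by
    intro x
    rw [abs_mul, abs_of_pos ht0]
    have h1 : |f x| ≤ ‖f‖ := f.norm_coe_le_norm x
    calc t * |f x| ≤ (1 / M) * M := by
          apply mul_le_mul (min_le_left _ _) (h1.trans (by linarith)) (abs_nonneg _)
            (by positivity)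
      _ = 1 := by field_simp
  -- integrability facts
  have hint1 : Integrable (fun x : I01 => φ x * (Real.exp (t * f x) - 1)) volume :=
    integrable_of_cont (φ.continuous.mul
      (((Real.continuous_exp.comp (continuous_const.mul f.continuous)).sub continuous_const)))
  have hint2 : Integrable (fun x : I01 => t * (φ x * f x) + t ^ 2 * (φ x * (f x) ^ 2)) volume := by
    apply Integrable.add
    · exact (integrable_of_cont (φ.continuous.mul f.continuous)).const_mul t
    · exact (integrable_of_cont (φ.continuous.mul (f.continuous.pow 2))).const_mul (t ^ 2)
  have hmain : t * ν f ≤ t * (∫ x : I01, φ x * f x) + t ^ 2 * K := by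
    have hsmul := h (t • f)
    rw [ContinuousLinearMap.map_smul, smul_eq_mul] at hsmul
    have heq : ∀ x : I01, (t • f) x = t * f x := fun x => rfl
    have step1 : (∫ x : I01, φ x * (Real.exp ((t • f) x) - 1))
        = ∫ x : I01, φ x * (Real.exp (t * f x) - 1) := by
      simp only [heq]
    have step2 : (∫ x : I01, φ x * (Real.exp (t * f x) - 1))
        ≤ ∫ x : I01, (t * (φ x * f x) + t ^ 2 * (φ x * (f x) ^ 2)) := by
      apply integral_mono hint1 hint2
      intro x
      have hb : Real.exp (t * f x) - 1 ≤ t * f x + (t * f x) ^ 2 :=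
        exp_sub_one_le_of_abs_le (htf x)
      have hφx := (hφ x).le
      calc φ x * (Real.exp (t * f x) - 1) ≤ φ x * (t * f x + (t * f x) ^ 2) :=
            mul_le_mul_of_nonneg_left hb hφx
        _ = t * (φ x * f x) + t ^ 2 * (φ x * (f x) ^ 2) := by ring
    have step3 : (∫ x : I01, (t * (φ x * f x) + t ^ 2 * (φ x * (f x) ^ 2)))
        = t * (∫ x : I01, φ x * f x) + t ^ 2 * K := by
      rw [integral_add (f := fun x : I01 => t * (φ x * f x)) (g := fun x : I01 => t ^ 2 * (φ x * (f x) ^ 2))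
        ((integrable_of_cont (φ.continuous.mul f.continuous)).const_mul t)
        ((integrable_of_cont (φ.continuous.mul (f.continuous.pow 2))).const_mul (t ^ 2)),
        integral_const_mul, integral_const_mul]
    calc t * ν f ≤ ∫ x : I01, φ x * (Real.exp ((t • f) x) - 1) := hsmul
      _ = ∫ x : I01, φ x * (Real.exp (t * f x) - 1) := step1
      _ ≤ ∫ x : I01, (t * (φ x * f x) + t ^ 2 * (φ x * (f x) ^ 2)) := step2
      _ = t * (∫ x : I01, φ x * f x) + t ^ 2 * K := step3
  have hdiv : ν f ≤ (∫ x : I01, φ x * f x) + t * K := by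
    have := hmain
    nlinarith
  have htK : t * K ≤ ε := by
    have ht2 : t ≤ ε / (K + 1) := min_le_right _ _
    have : t * K ≤ (ε / (K + 1)) * K :=
      mul_le_mul_of_nonneg_right ht2 hK0
    have hden : (0:ℝ) < K + 1 := by linarith
    calc t * K ≤ (ε / (K + 1)) * K := this
      _ ≤ ε := by
          rw [div_mul_eq_mul_div, div_le_iff₀ hden]
          nlinarith
  linarith

/-- If `ν ∈ 𝒮` satisfies `ν(f) ≤ ∫₀¹ φ(x)(e^{f(x)} - 1) dx` for every `f ∈ C([0,1])`
(equivalently `J_ini(ν) = 0`), then `ν(f) = ∫₀¹ φ f` for every `f ∈ C([0,1])`. -/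
theorem zero_initial_rate_implies_density
    (φ : CI) (hφ : ∀ x, 0 < φ x) (ν : S)
    (h : ∀ f : CI, ν f ≤ ∫ x : I01, φ x * (Real.exp (f x) - 1)) :
    ∀ f : CI, ν f = ∫ x : I01, φ x * f x := by
  intro f
  have h1 := key_le φ hφ ν h f
  have h2 := key_le φ hφ ν h (-f)
  rw [map_neg] at h2
  have heq : (∫ x : I01, φ x * (-f) x) = -∫ x : I01, φ x * f x := by
    simp only [ContinuousMap.neg_apply, mul_neg, integral_neg]
  rw [heq] at h2
  linarith
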